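/- Let n ≥ 2 be an integer and let a = n/r where n, r are integers with 1 < n/2 < r < n. Define k_n(a, d, μ) = ((2dμ^{n-2}+1)a^{n+1} - (a+n)(a-1)^n - 2dμ^{n-2}(a-1)^{n+1}) / (2(n+1)(a^n - (a-1)^n)) with d = r^{n-1} and μ = 1/r. Then k_n(a,d,μ) < 1. -/

import Mathlib

lemma aux_nat (n r : ℕ) (hrn : r < n) (hn2r : n < 2 * r) :
    (r + 1) * (n - r) ^ n < n ^ n := by
  have hn1 : 1 ≤ n := by omega
  have h2n : n < 2 ^ n := Nat.lt_two_pow_self (n := n)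
  have key : 2 ^ n * ((r + 1) * (n - r) ^ n) < 2 ^ n * n ^ n := by
    calc 2 ^ n * ((r + 1) * (n - r) ^ n) = (r + 1) * (2 * (n - r)) ^ n := by
          rw [mul_pow]; ring
      _ ≤ n * (n - 1) ^ n :=
          Nat.mul_le_mul (by omega) (Nat.pow_le_pow_left (by omega) n)
      _ < 2 ^ n * n ^ n := by
          have h1 : (n - 1) ^ n < n ^ n := Nat.pow_lt_pow_left (by omega) (by omega)
          have h2 : n ≤ 2 ^ n := le_of_lt h2n
          calc n * (n - 1) ^ n < n * n ^ n := by
                exact Nat.mul_lt_mul_of_le_of_lt (le_refl n) h1 (by omega)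
            _ ≤ 2 ^ n * n ^ n := Nat.mul_le_mul_right _ h2
  exact Nat.lt_of_mul_lt_mul_left key

theorem stmt_3 (n r : ℕ) (hn : 2 ≤ n)
    (h1 : (1 : ℚ) < (n : ℚ) / 2) (h2 : (n : ℚ) / 2 < r) (h3 : r < n)
    (a d μ : ℚ) (ha : a = (n : ℚ) / r) (hd : d = (r : ℚ) ^ (n - 1)) (hμ : μ = 1 / (r : ℚ)) :
    ((2 * d * μ ^ (n - 2) + 1) * a ^ (n + 1) - (a + n) * (a - 1) ^ n
        - 2 * d * μ ^ (n - 2) * (a - 1) ^ (n + 1)) /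
      (2 * ((n : ℚ) + 1) * (a ^ n - (a - 1) ^ n)) < 1 := by
  -- basic numeric facts
  have hn3 : 3 ≤ n := by
    by_contra h
    interval_cases n <;> norm_num at h1
  have hn2r : n < 2 * r := by
    have : (n : ℚ) < 2 * r := by linarith
    exact_mod_cast this
  obtain ⟨m, rfl⟩ : ∃ m, n = m + 2 := ⟨n - 2, by omega⟩
  have hr1 : 1 ≤ r := by omega
  have hR : (0 : ℚ) < (r : ℚ) := by positivity
  have hRne : ((r : ℚ)) ≠ 0 := ne_of_gt hR
  set N : ℚ := ((m + 2 : ℕ) : ℚ) with hN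
  have hNR : (r : ℚ) < N := by rw [hN]; exact_mod_cast h3
  -- simplify the exponents
  simp only [Nat.add_sub_cancel] at hd hμ ⊢
  -- 2 * d * μ ^ m = 2 * r
  have hc : 2 * d * μ ^ m = 2 * (r : ℚ) := by
    rw [hd, hμ, show m + 2 - 1 = m + 1 by omega]
    field_simp
    rw [one_div, inv_pow, pow_succ', mul_assoc, mul_inv_cancel₀ (pow_ne_zero _ hRne), mul_one]
  rw [hc]
  -- abbreviations
  set x : ℚ := N ^ (m + 2) with hx
  set y : ℚ := (N - (r : ℚ)) ^ (m + 2) with hy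
  set s : ℚ := (r : ℚ) ^ (m + 2) with hs
  have hspos : 0 < s := by positivity
  have hsne : s ≠ 0 := ne_of_gt hspos
  have ha2 : a ^ (m + 2) = x / s := by
    rw [ha, hx, hs, div_pow]
  have ha3 : a ^ (m + 2 + 1) = N * x / ((r : ℚ) * s) := by
    rw [ha, hx, hs]
    rw [div_pow]
    congr 1 <;> ring
  have hb2 : (a - 1) ^ (m + 2) = y / s := by
    rw [ha, hy, hs]
    rw [show (N / (r:ℚ) - 1) = (N - r) / r by field_simp]
    rw [div_pow]
  have hb3 : (a - 1) ^ (m + 2 + 1) = (N - (r : ℚ)) * y / ((r : ℚ) * s) := by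
    rw [ha, hy, hs]
    rw [show (N / (r:ℚ) - 1) = (N - r) / r by field_simp]
    rw [div_pow]
    congr 1 <;> ring
  -- denominator positive
  have hxy : y < x := by
    rw [hx, hy]
    apply pow_lt_pow_left₀ (by linarith) (by linarith) (by omega)
  have hden : 0 < 2 * (N + 1) * (a ^ (m + 2) - (a - 1) ^ (m + 2)) := by
    rw [ha2, hb2]
    have : (0:ℚ) < N := by rw [hN]; positivity
    have h4 : 0 < x / s - y / s := by
      rw [div_sub_div_same]
      exact div_pos (by linarith) hspos
    nlinarith
  rw [div_lt_one hden, ha2, ha3, hb2, hb3]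
  -- the key inequality
  have hkey : (2 * (r : ℚ) - N) * (x - ((r : ℚ) + 1) * y) > 0 := by
    apply mul_pos
    · have : (N : ℚ) < 2 * r := by rw [hN]; exact_mod_cast hn2r
      linarith
    · have hnat := aux_nat (m + 2) r h3 hn2r
      have hcast : ((r : ℚ) + 1) * y < x := by
        rw [hx, hy]
        have : (N - (r : ℚ)) = (((m + 2 - r : ℕ)) : ℚ) := by
          rw [hN]
          push_cast [Nat.cast_sub (le_of_lt h3)]
          ring
        rw [this, hN]
        exact_mod_cast hnat
      linarith
  -- reduce to the key inequality
  have hdiff : 2 * (N + 1) * (x / s - y / s)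
      - ((2 * (r : ℚ) + 1) * (N * x / ((r : ℚ) * s)) - (a + N) * (y / s)
        - 2 * (r : ℚ) * ((N - (r : ℚ)) * y / ((r : ℚ) * s)))
      = (2 * (r : ℚ) - N) * (x - ((r : ℚ) + 1) * y) / ((r : ℚ) * s) := by
    rw [ha]
    field_simp
    ring
  have hq : 0 < (2 * (r : ℚ) - N) * (x - ((r : ℚ) + 1) * y) / ((r : ℚ) * s) := by
    apply div_pos hkey (by positivity)
  linarith [hdiff, hq]
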